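/- Let r_1, r_2 ≥ 1 and 0 < a < r_2, 0 < b < r_1 be integers such that A_+(z) = [[1+z^{r_1}, -z^a],[-z^b, 1+z^{r_2}]] and A_-(z) = [[1+z^{r_1}, 0],[0, 1+z^{r_2}]] satisfy the symplectic property A_+(z)A_-(z^{-1})^T = A_-(z)A_+(z^{-1})^T. Then r_1 = r_2 = a + b. -/

import Mathlib

open LaurentPolynomial Matrix

theorem Apm_z_6 (r₁ r₂ a b : ℤ) (hr₁ : 1 ≤ r₁) (hr₂ : 1 ≤ r₂)
    (ha : 0 < a) (har : a < r₂) (hb : 0 < b) (hbr : b < r₁)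
    (hsymp :
      let Ap : Matrix (Fin 2) (Fin 2) (LaurentPolynomial ℤ) :=
        !![1 + T r₁, -T a; -T b, 1 + T r₂]
      let Am : Matrix (Fin 2) (Fin 2) (LaurentPolynomial ℤ) :=
        !![1 + T r₁, 0; 0, 1 + T r₂]
      Ap * (Am.map (invert (R := ℤ)))ᵀ = Am * (Ap.map (invert (R := ℤ)))ᵀ) :
    r₁ = r₂ ∧ r₁ = a + b := by
  simp only at hsymp
  have h01 := congrFun (congrFun hsymp 0) 1
  simp [Matrix.mul_apply, Fin.sum_univ_two] at h01
  rw [add_mul, add_mul, one_mul, one_mul, ← T_add, ← T_add] at h01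
  -- h01 : T a + T (-r₂ + a) = T (-b) + T (r₁ + -b)
  have hAt : ∀ m : ℤ, (T a + T (-r₂ + a) : LaurentPolynomial ℤ).coeff m
      = (T (-b) + T (r₁ + -b) : LaurentPolynomial ℤ).coeff m := fun m => by rw [h01]
  have h1 := hAt a
  have h2 := hAt (-r₂ + a)
  simp only [AddMonoidAlgebra.coeff_add, Finsupp.add_apply] at h1 h2
  simp only [T_apply] at h1 h2
  split_ifs at h1 h2 <;> omega
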